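/- Let D_+ = ⊕_{i=1}^r ℂd_i ⊗ O be the Lie algebra with basis d_i ⊗ t₀^{m₀} t^m (1 ≤ i ≤ r, m₀ ∈ ℤ, m ∈ ℤ^r) and bracket [d_i ⊗ t₀^{m₀} t^m, d_j ⊗ t₀^{n₀} t^n]₀ = n_i d_j ⊗ t₀^{m₀+n₀} t^{m+n} − m_j d_i ⊗ t₀^{m₀+n₀} t^{m+n} (the bracket of the derivations t_i ∂/∂t_i of O). Then the formulas (d_i ⊗ t₀^{m₀} t^m) · (K_j ⊗ t₀^{n₀} t^n) = n_i K_j ⊗ t₀^{m₀+n₀} t^{m+n} + δ_{i,j} Σ_{l=0}^r m_l K_l ⊗ t₀^{m₀+n₀} t^{m+n} give a well-defined action on the quotient K which makes K a representation of the Lie algebra D_+, i.e., [x, y]₀ · u = x · (y · u) − y · (x · u) for all x, y ∈ D_+ and u ∈ K. -/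

import Mathlib

/-- Exponents of monomials `t₀^{m₀} t^m = t₀^{m₀} t₁^{m₁} ⋯ t_r^{m_r}`. -/
abbrev TorIdx (r : ℕ) := ℤ × (Fin r → ℤ)

/-- The free module `⊕_{i=0}^r ℂK_i ⊗ O`, with basis `K_i ⊗ t₀^{m₀} t^m`
indexed by `(i, (m₀, m))`. -/
abbrev CF (r : ℕ) := (Fin (r + 1) × TorIdx r) →₀ ℂ

/-- The element `Σ_{l=0}^r c_l K_l ⊗ t₀^{e₀} t^e` where `(c_0, c_1, …, c_r) =
(m₀, m₁, …, m_r)`. -/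
noncomputable def consSum (r : ℕ) (m₀ : ℤ) (m : Fin r → ℤ) (e₀ : ℤ) (e : Fin r → ℤ) : CF r :=
  ∑ l : Fin (r + 1), Finsupp.single (l, (e₀, e)) (((Fin.cons m₀ m : Fin (r + 1) → ℤ) l : ℤ) : ℂ)

/-- The element `Σ_{i=0}^r m_i K_i ⊗ t₀^{m₀} t^m` spanning the relations. -/
noncomputable def relElem (r : ℕ) (m₀ : ℤ) (m : Fin r → ℤ) : CF r :=
  consSum r m₀ m m₀ m

/-- The subspace of relations, so that `K = CF r ⧸ RR r`. -/
noncomputable def RR (r : ℕ) : Submodule ℂ (CF r) :=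
  Submodule.span ℂ {x : CF r | ∃ (m₀ : ℤ) (m : Fin r → ℤ), x = relElem r m₀ m}

/-- The action of the derivation `d_i ⊗ t₀^{m₀} t^m` on the free module
`⊕_{j=0}^r ℂK_j ⊗ O`:
`K_j ⊗ t₀^{n₀} t^n ↦ n_i K_j ⊗ t₀^{m₀+n₀} t^{m+n}
  + δ_{i,j} Σ_{l=0}^r m_l K_l ⊗ t₀^{m₀+n₀} t^{m+n}`. -/
noncomputable def derK (r : ℕ) (m₀ : ℤ) (m : Fin r → ℤ) (i : Fin r) (u : CF r) : CF r :=
  u.sum fun jq c => c •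
    (Finsupp.single (jq.1, (m₀ + jq.2.1, m + jq.2.2)) ((jq.2.2 i : ℤ) : ℂ)
      + (if jq.1 = i.succ then consSum r m₀ m (m₀ + jq.2.1) (m + jq.2.2) else 0))

/-- The Lie algebra `D_+ = ⊕_{i=1}^r ℂ d_i ⊗ O`, with basis `d_i ⊗ t₀^{m₀} t^m`
indexed by `(i, (m₀, m))`. -/
abbrev DPlus (r : ℕ) := (Fin r × TorIdx r) →₀ ℂ

/-- The bracket of `D_+` (the bracket of the derivations `t_i ∂/∂t_i` of `O`):
`[d_i ⊗ t₀^{m₀}t^m, d_j ⊗ t₀^{n₀}t^n]₀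
  = n_i d_j ⊗ t₀^{m₀+n₀}t^{m+n} − m_j d_i ⊗ t₀^{m₀+n₀}t^{m+n}`. -/
noncomputable def brD (r : ℕ) (x y : DPlus r) : DPlus r :=
  x.sum fun p c => y.sum fun q c' => (c * c') •
    (((q.2.2 p.1 : ℤ) : ℂ) • Finsupp.single (q.1, (p.2.1 + q.2.1, p.2.2 + q.2.2)) (1 : ℂ)
      - ((p.2.2 q.1 : ℤ) : ℂ) • Finsupp.single (p.1, (p.2.1 + q.2.1, p.2.2 + q.2.2)) (1 : ℂ))

/-- The action of `D_+` on the free module `⊕_{j=0}^r ℂK_j ⊗ O`, extending the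
formulas `(d_i ⊗ t₀^{m₀}t^m) · (K_j ⊗ t₀^{n₀}t^n) = n_i K_j ⊗ t₀^{m₀+n₀}t^{m+n}
+ δ_{i,j} Σ_{l=0}^r m_l K_l ⊗ t₀^{m₀+n₀}t^{m+n}` bilinearly. -/
noncomputable def actD (r : ℕ) (d : DPlus r) (u : CF r) : CF r :=
  d.sum fun p c => c • derK r p.2.1 p.2.2 p.1 u

noncomputable def derKL (r : ℕ) (m₀ : ℤ) (m : Fin r → ℤ) (i : Fin r) : CF r →ₗ[ℂ] CF r :=
  Finsupp.lsum ℂ fun jq => LinearMap.toSpanSingleton ℂ (CF r)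
    (Finsupp.single (jq.1, (m₀ + jq.2.1, m + jq.2.2)) ((jq.2.2 i : ℤ) : ℂ)
      + (if jq.1 = i.succ then consSum r m₀ m (m₀ + jq.2.1) (m + jq.2.2) else 0))

lemma derK_eq (r : ℕ) (m₀ : ℤ) (m : Fin r → ℤ) (i : Fin r) (u : CF r) :
    derK r m₀ m i u = derKL r m₀ m i u := by
  rfl

lemma derK_single (r : ℕ) (m₀ : ℤ) (m : Fin r → ℤ) (i : Fin r) (k : Fin (r+1))
    (p₀ : ℤ) (p : Fin r → ℤ) (c : ℂ) :
    derK r m₀ m i (Finsupp.single (k, (p₀, p)) c) =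
      c • (Finsupp.single (k, (m₀ + p₀, m + p)) ((p i : ℤ) : ℂ)
        + (if k = i.succ then consSum r m₀ m (m₀ + p₀) (m + p) else 0)) := by
  rw [derK_eq, derKL, Finsupp.lsum_single, LinearMap.toSpanSingleton_apply]

lemma cons_add (r : ℕ) (a a' : ℤ) (b b' : Fin r → ℤ) (l : Fin (r+1)) :
    (Fin.cons a b : Fin (r+1) → ℤ) l + (Fin.cons a' b' : Fin (r+1) → ℤ) l
      = (Fin.cons (a+a') (b+b') : Fin (r+1) → ℤ) l := by
  refine Fin.cases ?_ ?_ l <;> simp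

lemma consSum_add (r : ℕ) (a a' : ℤ) (b b' : Fin r → ℤ) (e₀ : ℤ) (e : Fin r → ℤ) :
    consSum r a b e₀ e + consSum r a' b' e₀ e = consSum r (a+a') (b+b') e₀ e := by
  rw [consSum, consSum, consSum, ← Finset.sum_add_distrib]
  refine Finset.sum_congr rfl fun l _ => ?_
  rw [← Finsupp.single_add]
  rw [← Int.cast_add, cons_add]

lemma derK_consSum (r : ℕ) (m₀ : ℤ) (m : Fin r → ℤ) (i : Fin r)
    (a : ℤ) (b : Fin r → ℤ) (e₀ : ℤ) (e : Fin r → ℤ) :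
    derK r m₀ m i (consSum r a b e₀ e) =
      ((e i : ℤ) : ℂ) • consSum r a b (m₀ + e₀) (m + e)
      + ((b i : ℤ) : ℂ) • consSum r m₀ m (m₀ + e₀) (m + e) := by
  rw [derK_eq, consSum, map_sum]
  have h1 : ∀ l : Fin (r+1), derKL r m₀ m i
      (Finsupp.single (l, (e₀, e)) (((Fin.cons a b : Fin (r+1) → ℤ) l : ℤ) : ℂ))
      = ((e i : ℤ) : ℂ) • Finsupp.single (l, (m₀ + e₀, m + e)) (((Fin.cons a b : Fin (r+1) → ℤ) l : ℤ) : ℂ)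
        + (if l = i.succ then (((Fin.cons a b : Fin (r+1) → ℤ) l : ℤ) : ℂ) • consSum r m₀ m (m₀ + e₀) (m + e) else 0) := by
    intro l
    rw [← derK_eq, derK_single, smul_add]
    congr 1
    · rw [Finsupp.smul_single', Finsupp.smul_single']; ring_nf
    · split <;> simp
  simp only [h1]
  rw [Finset.sum_add_distrib]
  congr 1
  · rw [consSum, Finset.smul_sum]
  · rw [Finset.sum_ite_eq' Finset.univ i.succ
      (fun l => (((Fin.cons a b : Fin (r+1) → ℤ) l : ℤ) : ℂ) • consSum r m₀ m (m₀ + e₀) (m + e))]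
    simp [Fin.cons_succ]


lemma derK_add (r : ℕ) (m₀ : ℤ) (m : Fin r → ℤ) (i : Fin r) (u v : CF r) :
    derK r m₀ m i (u + v) = derK r m₀ m i u + derK r m₀ m i v := by
  simp only [derK_eq, map_add]

lemma derK_smul (r : ℕ) (m₀ : ℤ) (m : Fin r → ℤ) (i : Fin r) (c : ℂ) (u : CF r) :
    derK r m₀ m i (c • u) = c • derK r m₀ m i u := by
  simp only [derK_eq, map_smul]

lemma derK_zero (r : ℕ) (m₀ : ℤ) (m : Fin r → ℤ) (i : Fin r) :
    derK r m₀ m i 0 = 0 := by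
  simp only [derK_eq, map_zero]

lemma derK_relElem (r : ℕ) (m₀ : ℤ) (m : Fin r → ℤ) (i : Fin r) (n₀ : ℤ) (n : Fin r → ℤ) :
    derK r m₀ m i (relElem r n₀ n) = ((n i : ℤ) : ℂ) • relElem r (m₀ + n₀) (m + n) := by
  rw [relElem, derK_consSum, ← smul_add, consSum_add, add_comm n₀ m₀, add_comm n m, relElem]

lemma derK_mem_RR (r : ℕ) (m₀ : ℤ) (m : Fin r → ℤ) (i : Fin r) (u : CF r) (hu : u ∈ RR r) :
    derK r m₀ m i u ∈ RR r := by
  induction hu using Submodule.span_induction with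
  | mem x hx =>
    obtain ⟨n₀, n, rfl⟩ := hx
    rw [derK_relElem]
    exact Submodule.smul_mem _ _ (Submodule.subset_span ⟨_, _, rfl⟩)
  | zero => rw [derK_zero]; exact zero_mem _
  | add x y _ _ hx hy => rw [derK_add]; exact add_mem hx hy
  | smul c x _ hx => rw [derK_smul]; exact Submodule.smul_mem _ _ hx

lemma actD_mem_RR (r : ℕ) (d : DPlus r) (u : CF r) (hu : u ∈ RR r) :
    actD r d u ∈ RR r := by
  rw [actD, Finsupp.sum]
  exact Submodule.sum_mem _ fun p _ => Submodule.smul_mem _ _ (derK_mem_RR _ _ _ _ _ hu)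

lemma smZ {r : ℕ} (x : Fin (r+1) × TorIdx r) (z : ℤ) :
    Finsupp.single x ((z : ℤ) : ℂ) = ((z : ℤ) : ℂ) • Finsupp.single x (1 : ℂ) := by
  rw [Finsupp.smul_single', mul_one]

lemma comm_derK_single (r : ℕ) (m₀ n₀ p₀ : ℤ) (m n p : Fin r → ℤ) (i j : Fin r)
    (k : Fin (r+1)) (c : ℂ) :
    derK r m₀ m i (derK r n₀ n j (Finsupp.single (k, (p₀, p)) c))
      - derK r n₀ n j (derK r m₀ m i (Finsupp.single (k, (p₀, p)) c))
    = ((n i : ℤ) : ℂ) • derK r (m₀ + n₀) (m + n) j (Finsupp.single (k, (p₀, p)) c)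
      - ((m j : ℤ) : ℂ) • derK r (m₀ + n₀) (m + n) i (Finsupp.single (k, (p₀, p)) c) := by
  have e1 : m₀ + (n₀ + p₀) = m₀ + n₀ + p₀ := by ring
  have e2 : n₀ + (m₀ + p₀) = m₀ + n₀ + p₀ := by ring
  have e3 : m + (n + p) = m + n + p := by ring
  have e4 : n + (m + p) = m + n + p := by ring
  by_cases h1 : k = i.succ <;> by_cases h2 : k = j.succ
  · have hij : i = j := Fin.succ_injective _ (h1 ▸ h2)
    subst hij; subst h1
    simp only [derK_single, derK_smul, derK_add, derK_consSum, derK_zero, smul_add, smul_zero,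
      add_zero, zero_add, eq_self_iff_true, if_true, Pi.add_apply, Int.cast_add,
      Finsupp.single_add, smZ, add_smul, e1, e2, e3, e4, ← consSum_add]
    module
  · subst h1
    simp only [derK_single, derK_smul, derK_add, derK_consSum, derK_zero, smul_add, smul_zero,
      add_zero, zero_add, eq_self_iff_true, if_true, if_neg h2, Pi.add_apply, Int.cast_add,
      Finsupp.single_add, smZ, add_smul, e1, e2, e3, e4, ← consSum_add]
    module
  · subst h2
    simp only [derK_single, derK_smul, derK_add, derK_consSum, derK_zero, smul_add, smul_zero,
      add_zero, zero_add, eq_self_iff_true, if_true, if_neg h1, Pi.add_apply, Int.cast_add,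
      Finsupp.single_add, smZ, add_smul, e1, e2, e3, e4, ← consSum_add]
    module
  · simp only [derK_single, derK_smul, derK_add, derK_consSum, derK_zero, smul_add, smul_zero,
      add_zero, zero_add, if_neg h1, if_neg h2, Pi.add_apply, Int.cast_add,
      Finsupp.single_add, smZ, add_smul, e1, e2, e3, e4, ← consSum_add]
    module

lemma comm_derK (r : ℕ) (m₀ n₀ : ℤ) (m n : Fin r → ℤ) (i j : Fin r) (u : CF r) :
    derK r m₀ m i (derK r n₀ n j u) - derK r n₀ n j (derK r m₀ m i u)
    = ((n i : ℤ) : ℂ) • derK r (m₀ + n₀) (m + n) j u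
      - ((m j : ℤ) : ℂ) • derK r (m₀ + n₀) (m + n) i u := by
  induction u using Finsupp.induction_linear with
  | zero => simp only [derK_zero, smul_zero, sub_zero]
  | add f g hf hg =>
    simp only [derK_add, smul_add] at hf hg ⊢
    rw [add_sub_add_comm, hf, hg, ← add_sub_add_comm]
  | single a b =>
    obtain ⟨k, p₀, p⟩ := a
    exact comm_derK_single r m₀ n₀ p₀ m n p i j k b

/-- actD as a linear map in `d`. -/
lemma actD_eq_d (r : ℕ) (d : DPlus r) (u : CF r) :
    actD r d u = Finsupp.lsum ℂ
      (fun p => LinearMap.toSpanSingleton ℂ (CF r) (derK r p.2.1 p.2.2 p.1 u)) d := rfl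

lemma actD_single (r : ℕ) (i : Fin r) (m₀ : ℤ) (m : Fin r → ℤ) (c : ℂ) (u : CF r) :
    actD r (Finsupp.single (i, (m₀, m)) c) u = c • derK r m₀ m i u := by
  rw [actD_eq_d, Finsupp.lsum_single, LinearMap.toSpanSingleton_apply]

lemma actD_add_d (r : ℕ) (d d' : DPlus r) (u : CF r) :
    actD r (d + d') u = actD r d u + actD r d' u := by
  simp only [actD_eq_d, map_add]

lemma actD_zero_d (r : ℕ) (u : CF r) : actD r 0 u = 0 := by
  simp only [actD_eq_d, map_zero]

lemma actD_sub_d (r : ℕ) (d d' : DPlus r) (u : CF r) :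
    actD r (d - d') u = actD r d u - actD r d' u := by
  simp only [actD_eq_d, map_sub]

lemma actD_smul_d (r : ℕ) (c : ℂ) (d : DPlus r) (u : CF r) :
    actD r (c • d) u = c • actD r d u := by
  simp only [actD_eq_d, map_smul]

lemma actD_add_u (r : ℕ) (d : DPlus r) (u v : CF r) :
    actD r d (u + v) = actD r d u + actD r d v := by
  simp only [actD, derK_add, smul_add, Finsupp.sum_add]

lemma actD_sub_u (r : ℕ) (d : DPlus r) (u v : CF r) :
    actD r d (u - v) = actD r d u - actD r d v := by
  have h0 : actD r d 0 = 0 := by simp [actD, derK_zero]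
  have := actD_add_u r d (u - v) v
  rw [sub_add_cancel] at this
  rw [this]; abel

/-- brD of two singles. -/
lemma brD_single_single (r : ℕ) (i j : Fin r) (m₀ n₀ : ℤ) (m n : Fin r → ℤ) (a b : ℂ) :
    brD r (Finsupp.single (i, (m₀, m)) a) (Finsupp.single (j, (n₀, n)) b)
    = (a * b) • (((n i : ℤ) : ℂ) • Finsupp.single (j, (m₀ + n₀, m + n)) (1 : ℂ)
        - ((m j : ℤ) : ℂ) • Finsupp.single (i, (m₀ + n₀, m + n)) (1 : ℂ)) := by
  rw [brD, Finsupp.sum_single_index, Finsupp.sum_single_index] <;> simp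

lemma brD_zero_left (r : ℕ) (y : DPlus r) : brD r 0 y = 0 := by
  simp [brD]

lemma brD_add_left (r : ℕ) (x x' y : DPlus r) :
    brD r (x + x') y = brD r x y + brD r x' y := by
  rw [brD, brD, brD, Finsupp.sum_add_index]
  · intro p _; simp
  · intro p _ c c'
    rw [← Finsupp.sum_add]
    congr 1; ext q c''
    rw [← add_smul, ← add_mul]

lemma brD_zero_right (r : ℕ) (x : DPlus r) : brD r x 0 = 0 := by
  simp [brD]

lemma brD_add_right (r : ℕ) (x y y' : DPlus r) :
    brD r x (y + y') = brD r x y + brD r x y' := by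
  rw [brD, brD, brD, ← Finsupp.sum_add]
  congr 1; ext p c
  rw [Finsupp.sum_add_index]
  · intro q _; simp
  · intro q _ c' c''
    rw [← add_smul, ← mul_add]

lemma actD_zero_u (r : ℕ) (d : DPlus r) : actD r d 0 = 0 := by
  simp [actD, derK_zero]

lemma actD_bracket (r : ℕ) (x y : DPlus r) (u : CF r) :
    actD r (brD r x y) u = actD r x (actD r y u) - actD r y (actD r x u) := by
  induction x using Finsupp.induction_linear with
  | zero => simp [brD_zero_left, actD_zero_d, actD_zero_u]
  | add f g hf hg =>
    simp only [brD_add_left, actD_add_d, actD_add_u, hf, hg]; abel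
  | single px a =>
    induction y using Finsupp.induction_linear with
    | zero => simp [brD_zero_right, actD_zero_d, actD_zero_u]
    | add f g hf hg =>
      simp only [brD_add_right, actD_add_d, actD_add_u, hf, hg]; abel
    | single qy b =>
      obtain ⟨i, m₀, m⟩ := px; obtain ⟨j, n₀, n⟩ := qy
      rw [brD_single_single, actD_smul_d, actD_sub_d, actD_smul_d, actD_smul_d]
      simp only [actD_single, one_smul, derK_smul, smul_smul]
      rw [mul_comm b a, ← smul_sub, comm_derK]

noncomputable def actDLu (r : ℕ) (d : DPlus r) : CF r →ₗ[ℂ] CF r :=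
  d.sum fun p c => c • derKL r p.2.1 p.2.2 p.1

lemma actDLu_apply (r : ℕ) (d : DPlus r) (u : CF r) :
    actDLu r d u = actD r d u := by
  rw [actD, actDLu, Finsupp.sum, Finsupp.sum]
  simp [derK_eq]


/-- the action of `D_+` on `⊕ ℂK_i ⊗ O` descends to a well-defined
action on the quotient `K`, which makes `K` a representation of the Lie algebra
`D_+`. -/
theorem K_is_DPlus_representation (r : ℕ) (hr : 1 ≤ r) :
    (∀ (d : DPlus r) (u : CF r), u ∈ RR r → actD r d u ∈ RR r) ∧
    ∃ act : DPlus r → (CF r ⧸ RR r) → (CF r ⧸ RR r),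
      (∀ (d : DPlus r) (u : CF r), act d ((RR r).mkQ u) = (RR r).mkQ (actD r d u)) ∧
      (∀ (x y : DPlus r) (u : CF r ⧸ RR r),
        act (brD r x y) u = act x (act y u) - act y (act x u)) := by

  refine ⟨fun d u hu => actD_mem_RR r d u hu, ?_⟩
  have hinv : ∀ d : DPlus r, RR r ≤ Submodule.comap (actDLu r d) (RR r) := by
    intro d u hu
    simpa [Submodule.mem_comap, actDLu_apply] using actD_mem_RR r d u hu
  refine ⟨fun d => (RR r).mapQ (RR r) (actDLu r d) (hinv d), fun d u => ?_, fun x y u => ?_⟩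
  · simp [Submodule.mapQ_apply, Submodule.mkQ_apply, actDLu_apply]
  · obtain ⟨v, rfl⟩ := Submodule.Quotient.mk_surjective (RR r) u
    simp only [Submodule.mapQ_apply, actDLu_apply]
    rw [actD_bracket, Submodule.Quotient.mk_sub]
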